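/- Define transition kernel on ℕ≥1 by P(k, k') = (k'/k) ρ^{k'−k} σ^k ∑_{i_1+⋯+i_k = k', 0 ≤ i_j ≤ D} e^{−β(E_{i_1}+⋯+E_{i_k})}. Then for every k ≥ 1, ∑_{k'} P(k,k') = 1, i.e. P is a stochastic matrix. -/

import Mathlib

open Real Finset

/-- The transition kernel
`P(k,k') = (k'/k) ρ^{k'-k} σ^k ∑_{i_1+⋯+i_k=k', 0≤i_j≤D} e^{-β(E_{i_1}+⋯+E_{i_k})}`
is stochastic: for every `k ≥ 1`, `∑_{k'=0}^{Dk} P(k,k') = 1`. -/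
theorem kernel_is_stochastic
    (D : ℕ) (hD : 2 ≤ D) (E : Fin (D + 1) → ℝ) (β : ℝ)
    (ρ C σ : ℝ) (hρ : 0 < ρ) (hC : 0 < C)
    (hC1 : 1 / C = ∑ i : Fin (D + 1), Real.exp (-β * E i) * ρ ^ (i.1 : ℕ))
    (hC2 : 1 / C = ∑ i : Fin (D + 1), (i.1 : ℝ) * Real.exp (-β * E i) * ρ ^ (i.1 : ℕ))
    (hσ : 1 / C = ρ / σ)
    (P : ℕ → ℕ → ℝ)
    (hP : ∀ k k', P k k' = (k' : ℝ) / k * ρ ^ ((k' : ℤ) - (k : ℤ)) * σ ^ k *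
      ∑ f ∈ Finset.univ.filter
          (fun f : Fin k → Fin (D + 1) => ∑ j, (f j).1 = k'),
        Real.exp (-β * ∑ j, E (f j))) :
    ∀ k : ℕ, 1 ≤ k → ∑ k' ∈ Finset.range (D * k + 1), P k k' = 1 := by
  intro k hk
  have hkR : (0:ℝ) < k := by exact_mod_cast hk
  have hσ0 : σ ≠ 0 := by
    intro h
    rw [h, div_zero] at hσ
    have := one_div_pos.mpr hC
    linarith
  set g : Fin (D+1) → ℝ := fun i => Real.exp (-β * E i) * ρ ^ (i.1 : ℕ) with hgdef
  set hfun : Fin (D+1) → ℝ :=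
    fun i => (i.1:ℝ) * (Real.exp (-β * E i) * ρ ^ (i.1 : ℕ)) with hhdef
  have hsum_g : ∑ i, g i = 1 / C := hC1.symm
  have hsum_h : ∑ i, hfun i = 1 / C := by
    rw [hC2]; exact Finset.sum_congr rfl fun i _ => by simp [hhdef, mul_assoc]
  -- fiberwise decomposition over the value of ∑ j, (f j).1
  have key : ∑ k' ∈ Finset.range (D * k + 1), P k k'
      = ∑ f : Fin k → Fin (D + 1),
          ((∑ j, (f j).1 : ℕ) : ℝ) / k * ρ ^ (((∑ j, (f j).1 : ℕ) : ℤ) - (k : ℤ)) * σ ^ k *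
            Real.exp (-β * ∑ j, E (f j)) := by
    rw [← Finset.sum_fiberwise_of_maps_to
        (g := fun f : Fin k → Fin (D+1) => ∑ j, (f j).1)
        (t := Finset.range (D * k + 1))
        (fun f _ => by
          simp only [Finset.mem_range]
          have : ∑ j, (f j).1 ≤ ∑ _j : Fin k, D :=
            Finset.sum_le_sum fun j _ => Nat.lt_succ_iff.mp (f j).2
          simp only [Finset.sum_const, Finset.card_univ, Fintype.card_fin,
            smul_eq_mul] at this
          exact Nat.lt_succ_of_le (this.trans_eq (Nat.mul_comm k D)))]
    refine Finset.sum_congr rfl fun k' _ => ?_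
    rw [hP, Finset.mul_sum]
    refine Finset.sum_congr rfl fun f hf => ?_
    simp only [Finset.mem_filter] at hf
    rw [hf.2]
  rw [key]
  -- rewrite each summand via products
  have step2 : ∀ f : Fin k → Fin (D + 1),
      ((∑ j, (f j).1 : ℕ) : ℝ) / k * ρ ^ (((∑ j, (f j).1 : ℕ) : ℤ) - (k : ℤ)) * σ ^ k *
        Real.exp (-β * ∑ j, E (f j))
      = (1 / k) * (ρ ^ k)⁻¹ * σ ^ k *
          ∑ j : Fin k, ∏ l : Fin k, (if l = j then hfun (f l) else g (f l)) := by
    intro f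
    have hzp : ρ ^ (((∑ j, (f j).1 : ℕ) : ℤ) - (k : ℤ))
        = ρ ^ (∑ j, (f j).1) * (ρ ^ k)⁻¹ := by
      rw [zpow_sub₀ hρ.ne', zpow_natCast, zpow_natCast, div_eq_mul_inv]
    have hprod : ∀ j : Fin k,
        ∏ l : Fin k, (if l = j then hfun (f l) else g (f l))
        = ((f j).1 : ℝ) * ∏ l : Fin k, g (f l) := by
      intro j
      have : ∀ l : Fin k, (if l = j then hfun (f l) else g (f l))
          = (if l = j then ((f l).1 : ℝ) else 1) * g (f l) := by
        intro l
        by_cases hl : l = j <;> simp [hl, hhdef, hgdef]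
      rw [Finset.prod_congr rfl fun l _ => this l, Finset.prod_mul_distrib,
        Finset.prod_ite_eq' Finset.univ j (fun l => ((f l).1 : ℝ))]
      simp
    have hgp : ∏ l : Fin k, g (f l)
        = Real.exp (-β * ∑ j, E (f j)) * ρ ^ (∑ j, (f j).1) := by
      simp only [hgdef]
      rw [Finset.prod_mul_distrib, ← Real.exp_sum, Finset.prod_pow_eq_pow_sum]
      congr 1
      rw [Finset.mul_sum]
    rw [Finset.sum_congr rfl fun j _ => hprod j, ← Finset.sum_mul, hgp, hzp]
    push_cast
    ring
  rw [Finset.sum_congr rfl fun f _ => step2 f, ← Finset.mul_sum]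
  -- compute the big sum
  have step3 : ∑ f : Fin k → Fin (D+1),
      ∑ j : Fin k, ∏ l : Fin k, (if l = j then hfun (f l) else g (f l))
      = (k:ℝ) * (1/C)^k := by
    rw [Finset.sum_comm]
    have hj : ∀ j : Fin k,
        ∑ f : Fin k → Fin (D+1), ∏ l : Fin k, (if l = j then hfun (f l) else g (f l))
        = (1/C)^k := by
      intro j
      have hps := Finset.prod_univ_sum (fun _ : Fin k => (Finset.univ : Finset (Fin (D+1))))
        (fun l i => if l = j then hfun i else g i)
      rw [Fintype.piFinset_univ] at hps
      rw [← hps]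
      calc ∏ l : Fin k, (∑ i, if l = j then hfun i else g i)
          = ∏ _l : Fin k, (1/C : ℝ) := by
            refine Finset.prod_congr rfl fun l _ => ?_
            by_cases hl : l = j <;> simp [hl, hsum_h, hsum_g]
        _ = (1/C)^k := by simp
    rw [Finset.sum_congr rfl fun j _ => hj j]
    simp [mul_comm]
  rw [step3, hσ]
  field_simp
  rw [← mul_pow, mul_div_assoc', mul_div_right_comm, div_self hσ0, one_mul]
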